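/- arXiv:2010.11597 — 3 statements merged into one kernel-verified Lean document; each statement's English description precedes it below -/
import Mathlib

section
/- Let κ be an infinite regular cardinal and let T be a non-empty <κ-closed pruned subtree of ^{<κ}κ. Then N_t ∩ [T] is non-empty for every t ∈ T, and the closed set [T] is a retract of ^κκ. -/
open Cardinal Set

noncomputable section

namespace GBaire

universe u

/-- The underlying well-ordered set of the cardinal `κ`, i.e. the type of ordinals `< κ`. -/
abbrev K (κ : Cardinal.{u}) : Type u := κ.ord.ToType

/-- The set `^{<κ}κ` of all functions from a proper initial segment of `κ` to `κ`. -/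
abbrev PreFun (κ : Cardinal.{u}) : Type u := Σ α : K κ, ({β : K κ // β < α} → K κ)

variable (κ : Cardinal.{u})

/-- The restriction `x ↾ α` of a function `x ∈ ^κκ` to the initial segment determined by `α`. -/
def resT (x : K κ → K κ) (α : K κ) : PreFun κ := ⟨α, fun β => x β.1⟩

/-- The restriction of `s ∈ ^{<κ}κ` to (the minimum of its domain and) `γ`.  When
`γ ≤ s.1` this is the restriction `s ↾ γ`; otherwise it equals `s`. -/
def cut (s : PreFun κ) (γ : K κ) : PreFun κ :=
  ⟨min γ s.1, fun β => s.2 ⟨β.1, lt_of_lt_of_le β.2 (min_le_right _ _)⟩⟩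

/-- A subtree of `^{<κ}κ`: a set of elements of `^{<κ}κ` closed under restrictions
to smaller ordinals. -/
def IsSubtree (T : Set (PreFun κ)) : Prop :=
  ∀ s ∈ T, ∀ γ : K κ, γ < s.1 → cut κ s γ ∈ T

/-- The `α`-th level `T(α)` of `T`. -/
def level (T : Set (PreFun κ)) (α : K κ) : Set (PreFun κ) := {s ∈ T | s.1 = α}

/-- The set `[T]` of cofinal branches of `T`, i.e. all `x ∈ ^κκ` all of whose
restrictions lie in `T`. -/
def branches (T : Set (PreFun κ)) : Set (K κ → K κ) := {x | ∀ α : K κ, resT κ x α ∈ T}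

/-- `T` is a `κ`-Kurepa subtree of `^{<κ}κ`: a subtree all of whose levels are nonempty
of cardinality `< κ` and with at least `κ⁺` many cofinal branches. -/
def IsKurepa (T : Set (PreFun κ)) : Prop :=
  IsSubtree κ T ∧ (∀ α : K κ, (level κ T α).Nonempty ∧ #(level κ T α) < κ) ∧
    Order.succ κ ≤ #(branches κ T)

/-- The basic open set `N_s = {x ∈ ^κκ | s ⊆ x}`. -/
def Nbhd (s : PreFun κ) : Set (K κ → K κ) := {x | resT κ x s.1 = s}

/-- The topology of the generalized Baire space `^κκ`, generated by the sets `N_s`. -/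
def baire : TopologicalSpace (K κ → K κ) :=
  TopologicalSpace.generateFrom {U | ∃ s : PreFun κ, U = Nbhd κ s}

/-- `X` is a continuous image of `^κκ`: there is a continuous surjection from `^κκ`
onto `X` (with the subspace topology). -/
def IsContImage (X : Set (K κ → K κ)) : Prop :=
  letI := baire κ
  ∃ f : (K κ → K κ) → X, Continuous f ∧ Function.Surjective f

/-- `X` is a retract of `^κκ`: there is a continuous `r : ^κκ → ^κκ` with range
contained in `X` that is the identity on `X`. -/
def IsRetract (X : Set (K κ → K κ)) : Prop :=
  letI := baire κ
  ∃ r : (K κ → K κ) → (K κ → K κ),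
    Continuous r ∧ Set.range r ⊆ X ∧ ∀ x ∈ X, r x = x

/-- `y` is an isolated point of `Y ⊆ ^κκ`. -/
def IsIsolatedIn (Y : Set (K κ → K κ)) (y : K κ → K κ) : Prop :=
  y ∈ Y ∧ ∃ α : K κ, Nbhd κ (resT κ y α) ∩ Y = {y}

/-- `T` is slim: `|T(α)| ≤ |α|` for all sufficiently large `α < κ`. -/
def IsSlim (T : Set (PreFun κ)) : Prop :=
  ∃ α₀ : K κ, ∀ α : K κ, α₀ ≤ α → #(level κ T α) ≤ #{β : K κ // β < α}

/-- `C ⊆ κ` is closed: it contains every least upper bound of a nonempty subset of `C`. -/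
def ClosedIn (C : Set (K κ)) : Prop :=
  ∀ A ⊆ C, A.Nonempty → ∀ x : K κ, IsLUB A x → x ∈ C

/-- `C ⊆ κ` is unbounded in `κ`. -/
def UnboundedIn (C : Set (K κ)) : Prop := ∀ x : K κ, ∃ y ∈ C, x < y

/-- `S ⊆ κ` is stationary in `κ`: it meets every closed unbounded subset of `κ`. -/
def Stationary (S : Set (K κ)) : Prop :=
  ∀ C : Set (K κ), ClosedIn κ C → UnboundedIn κ C → (S ∩ C).Nonempty

/-- `T` is stationary slim: `|T(α)| ≤ |α|` for stationarily many `α < κ`. -/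
def StatSlim (T : Set (PreFun κ)) : Prop :=
  Stationary κ {α : K κ | #(level κ T α) ≤ #{β : K κ // β < α}}

/-- `α` is a limit ordinal (as an element of `κ`): it is neither the least element
nor a successor. -/
def IsLimitElt (α : K κ) : Prop :=
  (∃ β : K κ, β < α) ∧ ∀ β : K κ, β < α → ∃ γ : K κ, β < γ ∧ γ < α

/-- The boundary `∂T` of a subtree `T`: the minimal elements of `^{<κ}κ \ T`. -/
def boundary (T : Set (PreFun κ)) : Set (PreFun κ) :=
  {t | t ∉ T ∧ ∀ γ : K κ, γ < t.1 → cut κ t γ ∈ T}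

/-- `T` is superthin: for every limit ordinal `α < κ`, the set of elements of
`T ∪ ∂T` with domain `α` has cardinality `< κ`. -/
def IsSuperthin (T : Set (PreFun κ)) : Prop :=
  ∀ α : K κ, IsLimitElt κ α → #{s ∈ T ∪ boundary κ T | s.1 = α} < κ

/-- `T` is pruned: every element of `T` has a proper extension in `T`. -/
def IsPruned (T : Set (PreFun κ)) : Prop :=
  ∀ s ∈ T, ∃ t ∈ T, s.1 < t.1 ∧ cut κ t s.1 = s

/-- `T` is `<κ`-closed: the union of every (strictly increasing with respect to proper
end-extension) sequence of elements of `T` indexed by an ordinal `< κ` again lies in `T`.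
Here `u` is the union of the sequence `s` iff the domain of `u` is the least upper bound
of the domains of the `s ξ` and every `s ξ` is a restriction of `u`. -/
def IsLtClosed (T : Set (PreFun κ)) : Prop :=
  ∀ (γ : K κ) (s : {ξ : K κ // ξ < γ} → PreFun κ),
    (∀ ξ ζ : {ξ : K κ // ξ < γ}, ξ < ζ → (s ξ).1 < (s ζ).1 ∧ cut κ (s ζ) (s ξ).1 = s ξ) →
    (∀ ξ, s ξ ∈ T) →
    ∀ u : PreFun κ, IsLUB (Set.range fun ξ => (s ξ).1) u.1 →
      (∀ ξ, cut κ u (s ξ).1 = s ξ) → u ∈ T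

/-- `T` contains a Cantor subtree. -/
def HasCantorSubtree (T : Set (PreFun κ)) : Prop :=
  ∃ (l : ℕ → K κ) (lam : K κ), StrictMono l ∧ IsLUB (Set.range l) lam ∧
    (level κ T lam).Nonempty ∧
    ∃ B ⊆ level κ T lam, ¬ B.Countable ∧
      ∀ n : ℕ, ((fun t => cut κ t (l n)) '' B).Countable

/-- proper end-extension on `^{<κ}κ`. -/
def pext (s t : PreFun κ) : Prop := s.1 < t.1 ∧ cut κ t s.1 = s

/-- A set `A ⊆ ^{<κ}κ`, regarded as a tree under proper end-extension, is trivially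
coherent: it is order-isomorphic to a subtree of `^{<λ}2` (for `λ` its height) all of
whose elements `t` satisfy that `t⁻¹{0}` is finite.  (Here the comparison tree is
realized as a subtree `U` of `^{<κ}κ` taking only the values `0` and `1`, i.e. values
with at most one predecessor, such that each `u ∈ U` takes the value `0`, i.e. the
value with no predecessor, only finitely often.) -/
def TriviallyCoherent (A : Set (PreFun κ)) : Prop :=
  ∃ U : Set (PreFun κ),
    IsSubtree κ U ∧
    (∀ u ∈ U, ∀ β : {b : K κ // b < u.1}, #{γ : K κ // γ < u.2 β} ≤ 1) ∧
    (∀ u ∈ U, {β : {b : K κ // b < u.1} | ¬ ∃ γ : K κ, γ < u.2 β}.Finite) ∧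
    ∃ f : A → U, Function.Bijective f ∧
      ∀ s t : A, pext κ s.1 t.1 ↔ pext κ (f s).1 (f t).1

/-- `T` is locally coherent: each of its proper initial segments `T ∩ ^{<α}κ` is
trivially coherent. -/
def LocallyCoherent (T : Set (PreFun κ)) : Prop :=
  ∀ α : K κ, TriviallyCoherent κ {s ∈ T | s.1 < α}

end GBaire

namespace GBaire

universe u

attribute [local instance] Classical.propDecidable

instance instKWO (κ : Cardinal.{u}) : IsWellOrder (K κ) (· < ·) := isWellOrder_lt

variable {κ : Cardinal.{u}}

/-! ### Basic facts about the order on `K κ` -/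

theorem card_Iio_lt (α : K κ) : #{β : K κ // β < α} < κ := by
  rw [← Ordinal.card_typein (α := K κ) (r := (· < ·)) α]
  exact Cardinal.lt_ord.mp (Ordinal.typein_lt_self α)

theorem lt_bound (hreg : κ.IsRegular) {A : Set (K κ)} (hA : #A < κ) :
    ∃ b : K κ, ∀ a ∈ A, a < b := by
  have h : #A < (Ordinal.type ((· < ·) : K κ → K κ → Prop)).cof := by
    rw [Ordinal.type_toType, hreg.cof_eq]; exact hA
  exact not_isCofinal_iff.mp (fun hcof => (Order.cof_le hcof).not_gt (by rwa [Ordinal.cof_type] at h))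

theorem exists_gt' (hreg : κ.IsRegular) (a : K κ) : ∃ b : K κ, a < b := by
  obtain ⟨b, hb⟩ := lt_bound hreg (A := {a})
    (by rw [Cardinal.mk_singleton]; exact lt_of_lt_of_le Cardinal.one_lt_aleph0 hreg.aleph0_le)
  exact ⟨b, hb a rfl⟩

theorem exists_lub' (hreg : κ.IsRegular) (A : Set (K κ)) (hA : #A < κ) : ∃ b, IsLUB A b := by
  obtain ⟨c, hc⟩ := lt_bound hreg hA
  have hne : (upperBounds A).Nonempty := ⟨c, fun a ha => (hc a ha).le⟩
  refine ⟨wellFounded_lt.min _ hne, wellFounded_lt.min_mem _ hne, fun c' hc' => ?_⟩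
  exact not_lt.mp (wellFounded_lt.not_lt_min _ hc')

theorem K_nonempty (hreg : κ.IsRegular) : Nonempty (K κ) :=
  Ordinal.toType_nonempty_iff_ne_zero.mpr
    (by rw [Ne, Cardinal.ord_eq_zero]; exact (aleph0_pos.trans_le hreg.aleph0_le).ne')

/-! ### Basic facts about `PreFun`, `cut`, `resT` -/

theorem PreFun.ext' {s t : PreFun κ} (h1 : s.1 = t.1)
    (h2 : ∀ (β : K κ) (hs : β < s.1) (ht : β < t.1), s.2 ⟨β, hs⟩ = t.2 ⟨β, ht⟩) : s = t := by
  obtain ⟨a, f⟩ := s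
  obtain ⟨b, g⟩ := t
  dsimp only at h1
  subst h1
  simp only [Sigma.mk.inj_iff, heq_eq_eq, true_and]
  funext β
  exact h2 β.1 β.2 β.2

theorem apply_eq_of_eq {s t : PreFun κ} (h : s = t) (β : K κ) (hs : β < s.1) (ht : β < t.1) :
    s.2 ⟨β, hs⟩ = t.2 ⟨β, ht⟩ := by subst h; rfl

theorem cut_fst (s : PreFun κ) (γ : K κ) : (cut κ s γ).1 = min γ s.1 := rfl

theorem cut_cut (s : PreFun κ) {γ δ : K κ} (h : δ ≤ γ) :
    cut κ (cut κ s γ) δ = cut κ s δ := by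
  apply PreFun.ext'
  · show min δ (min γ s.1) = min δ s.1
    rw [← min_assoc, min_eq_left h]
  · intro β h1 h2; rfl

theorem cut_self (s : PreFun κ) {γ : K κ} (h : s.1 ≤ γ) : cut κ s γ = s := by
  apply PreFun.ext'
  · exact min_eq_right h
  · intro β h1 h2; rfl

theorem cut_resT' (x : K κ → K κ) (α γ : K κ) :
    cut κ (resT κ x α) γ = resT κ x (min γ α) := rfl

theorem agree_of_cut_eq {s u : PreFun κ} (h : cut κ u s.1 = s) (β : K κ)
    (hs : β < s.1) (hu : β < u.1) : u.2 ⟨β, hu⟩ = s.2 ⟨β, hs⟩ := by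
  have hc : β < (cut κ u s.1).1 := by rw [cut_fst]; exact lt_min hs hu
  have h2 := apply_eq_of_eq h β hc hs
  rw [← h2]; rfl

theorem resT_agree {x y : K κ → K κ} {δ : K κ} (h : resT κ y δ = resT κ x δ) {γ : K κ}
    (hγ : γ ≤ δ) : resT κ y γ = resT κ x γ := by
  have h2 := congrArg (fun s => cut κ s γ) h
  simp only [cut_resT', min_eq_left hγ] at h2
  exact h2

/-! ### Construction of a branch through a point of the tree -/

def lubOf (d : K κ) (A : Set (K κ)) : K κ :=
  if h : ∃ b, IsLUB A b then h.choose else d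

theorem lubOf_spec {A : Set (K κ)} (d : K κ) (h : ∃ b, IsLUB A b) :
    IsLUB A (lubOf d A) := by
  rw [lubOf, dif_pos h]; exact h.choose_spec

variable (κ) in
def extendT (T : Set (PreFun κ)) (hpr : IsPruned κ T) (s : PreFun κ) : PreFun κ :=
  if h : s ∈ T then (hpr s h).choose else s

theorem extendT_spec (T : Set (PreFun κ)) (hpr : IsPruned κ T) {s : PreFun κ} (h : s ∈ T) :
    extendT κ T hpr s ∈ T ∧ pext κ s (extendT κ T hpr s) := by
  rw [extendT, dif_pos h]
  obtain ⟨h1, h2, h3⟩ := (hpr s h).choose_spec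
  exact ⟨h1, h2, h3⟩

variable (κ) in
def unionAt (t : PreFun κ) (α : K κ) (p : {β : K κ // β < α} → PreFun κ) : PreFun κ :=
  if hα : Nonempty {β : K κ // β < α} then
    ⟨lubOf t.1 (Set.range fun ξ => (p ξ).1),
      fun β => if h : ∃ ξ : {b : K κ // b < α}, β.1 < (p ξ).1
        then (p h.choose).2 ⟨β.1, h.choose_spec⟩ else β.1⟩
  else t

theorem unionAt_spec (hreg : κ.IsRegular) (t : PreFun κ) (α : K κ)
    (p : {β : K κ // β < α} → PreFun κ) (hα : Nonempty {β : K κ // β < α})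
    (hchain : ∀ ξ ζ : {β : K κ // β < α}, ξ.1 < ζ.1 → pext κ (p ξ) (p ζ)) :
    IsLUB (Set.range fun ξ => (p ξ).1) (unionAt κ t α p).1 ∧
      ∀ ξ, cut κ (unionAt κ t α p) ((p ξ).1) = p ξ := by
  have hAcard : #(Set.range fun ξ : {β : K κ // β < α} => (p ξ).1) < κ :=
    lt_of_le_of_lt Cardinal.mk_range_le (card_Iio_lt α)
  have hex := exists_lub' hreg _ hAcard
  have hagree : ∀ (ξ ζ : {β : K κ // β < α}) (β : K κ) (h1 : β < (p ξ).1)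
      (h2 : β < (p ζ).1), (p ξ).2 ⟨β, h1⟩ = (p ζ).2 ⟨β, h2⟩ := by
    intro ξ ζ β h1 h2
    rcases lt_trichotomy ξ.1 ζ.1 with h | h | h
    · exact (agree_of_cut_eq (hchain ξ ζ h).2 β h1 h2).symm
    · cases Subtype.ext h; rfl
    · exact agree_of_cut_eq (hchain ζ ξ h).2 β h2 h1
  rw [unionAt, dif_pos hα]
  refine ⟨lubOf_spec t.1 hex, fun ξ => ?_⟩
  have hlub := lubOf_spec (A := Set.range fun ξ : {β : K κ // β < α} => (p ξ).1) t.1 hex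
  have hle : (p ξ).1 ≤ lubOf t.1 (Set.range fun ξ : {β : K κ // β < α} => (p ξ).1) :=
    hlub.1 ⟨ξ, rfl⟩
  apply PreFun.ext'
  · exact min_eq_left hle
  · intro β h1 h2
    have hex2 : ∃ ζ : {b : K κ // b < α}, β < (p ζ).1 := ⟨ξ, h2⟩
    show (if h : ∃ ζ : {b : K κ // b < α}, β < (p ζ).1
        then (p h.choose).2 ⟨β, h.choose_spec⟩ else β) = (p ξ).2 ⟨β, h2⟩
    rw [dif_pos hex2]
    exact hagree _ _ _ _ _

variable (κ) in
def seqG (T : Set (PreFun κ)) (hpr : IsPruned κ T) (t : PreFun κ) : K κ → PreFun κ :=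
  (wellFounded_lt (α := K κ)).fix
    (fun α rec => extendT κ T hpr (unionAt κ t α (fun ξ => rec ξ.1 ξ.2)))

theorem seqG_eq (T : Set (PreFun κ)) (hpr : IsPruned κ T) (t : PreFun κ) (α : K κ) :
    seqG κ T hpr t α
      = extendT κ T hpr (unionAt κ t α (fun ξ => seqG κ T hpr t ξ.1)) :=
  WellFounded.fix_eq _ _ _

theorem seqG_spec (hreg : κ.IsRegular) {T : Set (PreFun κ)}
    (hclosed : IsLtClosed κ T) (hpr : IsPruned κ T) {t : PreFun κ} (ht : t ∈ T) (α : K κ) :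
    seqG κ T hpr t α ∈ T ∧ t.1 < (seqG κ T hpr t α).1 ∧ cut κ (seqG κ T hpr t α) t.1 = t ∧
      ∀ β, β < α → pext κ (seqG κ T hpr t β) (seqG κ T hpr t α) := by
  induction α using WellFoundedLT.induction with
  | _ α IH =>
  set p : {β : K κ // β < α} → PreFun κ := fun ξ => seqG κ T hpr t ξ.1 with hp
  have hgα : seqG κ T hpr t α = extendT κ T hpr (unionAt κ t α p) := seqG_eq T hpr t α
  have hu : unionAt κ t α p ∈ T ∧ t.1 ≤ (unionAt κ t α p).1 ∧
      cut κ (unionAt κ t α p) t.1 = t ∧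
      ∀ ξ : {β : K κ // β < α},
        (p ξ).1 ≤ (unionAt κ t α p).1 ∧ cut κ (unionAt κ t α p) (p ξ).1 = p ξ := by
    by_cases hα : Nonempty {β : K κ // β < α}
    · have hchain : ∀ ξ ζ : {β : K κ // β < α}, ξ.1 < ζ.1 → pext κ (p ξ) (p ζ) :=
        fun ξ ζ h => (IH ζ.1 ζ.2).2.2.2 ξ.1 h
      obtain ⟨hlub, hcut⟩ := unionAt_spec hreg t α p hα hchain
      have hle : ∀ ξ, (p ξ).1 ≤ (unionAt κ t α p).1 := fun ξ => hlub.1 ⟨ξ, rfl⟩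
      have hmemT : unionAt κ t α p ∈ T := by
        refine hclosed α p (fun ξ ζ h => ?_) (fun ξ => (IH ξ.1 ξ.2).1) _ hlub hcut
        have h' : (ξ : K κ) < (ζ : K κ) := Subtype.coe_lt_coe.mpr h
        exact ⟨(hchain ξ ζ h').1, (hchain ξ ζ h').2⟩
      obtain ⟨ξ₀⟩ := hα
      have ht1 : t.1 ≤ (p ξ₀).1 := le_of_lt (IH ξ₀.1 ξ₀.2).2.1
      have hcutt : cut κ (unionAt κ t α p) t.1 = t := by
        rw [show cut κ (unionAt κ t α p) t.1 = cut κ (cut κ (unionAt κ t α p) (p ξ₀).1) t.1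
            from (cut_cut _ ht1).symm, hcut ξ₀, (IH ξ₀.1 ξ₀.2).2.2.1]
      exact ⟨hmemT, ht1.trans (hle ξ₀), hcutt, fun ξ => ⟨hle ξ, hcut ξ⟩⟩
    · have heq : unionAt κ t α p = t := by rw [unionAt, dif_neg hα]
      rw [heq]
      exact ⟨ht, le_refl _, cut_self t (le_refl _), fun ξ => (hα ⟨ξ⟩).elim⟩
  obtain ⟨huT, hut1, hutcut, hup⟩ := hu
  obtain ⟨heT, hpe⟩ := extendT_spec T hpr huT
  rw [hgα]
  refine ⟨heT, lt_of_le_of_lt hut1 hpe.1, ?_, ?_⟩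
  · rw [show cut κ (extendT κ T hpr (unionAt κ t α p)) t.1
        = cut κ (cut κ (extendT κ T hpr (unionAt κ t α p)) (unionAt κ t α p).1) t.1
        from (cut_cut _ hut1).symm, hpe.2, hutcut]
  · intro β hβ
    refine ⟨lt_of_le_of_lt (hup ⟨β, hβ⟩).1 hpe.1, ?_⟩
    rw [show cut κ (extendT κ T hpr (unionAt κ t α p)) (seqG κ T hpr t β).1
        = cut κ (cut κ (extendT κ T hpr (unionAt κ t α p)) (unionAt κ t α p).1)
            (seqG κ T hpr t β).1
        from (cut_cut _ (hup ⟨β, hβ⟩).1).symm, hpe.2]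
    exact (hup ⟨β, hβ⟩).2

theorem exists_branch (hreg : κ.IsRegular) {T : Set (PreFun κ)} (hsub : IsSubtree κ T)
    (hclosed : IsLtClosed κ T) (hpr : IsPruned κ T) {t : PreFun κ} (ht : t ∈ T) :
    ∃ x : K κ → K κ, x ∈ Nbhd κ t ∧ x ∈ branches κ T := by
  have spec := fun α => seqG_spec hreg hclosed hpr ht α
  set g : K κ → PreFun κ := seqG κ T hpr t with hgdef
  have hmono : StrictMono fun α => (g α).1 := fun a b h => ((spec b).2.2.2 a h).1
  have hub : ∀ β : K κ, ∃ ζ, β < (g ζ).1 := by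
    intro β
    obtain ⟨ζ, hζ⟩ := exists_gt' hreg β
    exact ⟨ζ, lt_of_lt_of_le hζ hmono.le_apply⟩
  set x : K κ → K κ := fun β => (g (hub β).choose).2 ⟨β, (hub β).choose_spec⟩ with hx
  have hgagree : ∀ (ζ₁ ζ₂ : K κ) (β : K κ) (h1 : β < (g ζ₁).1) (h2 : β < (g ζ₂).1),
      (g ζ₁).2 ⟨β, h1⟩ = (g ζ₂).2 ⟨β, h2⟩ := by
    intro ζ₁ ζ₂ β h1 h2
    rcases lt_trichotomy ζ₁ ζ₂ with h | h | h
    · exact (agree_of_cut_eq ((spec ζ₂).2.2.2 ζ₁ h).2 β h1 h2).symm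
    · cases h; rfl
    · exact agree_of_cut_eq ((spec ζ₁).2.2.2 ζ₂ h).2 β h2 h1
  have hres : ∀ (α ζ : K κ), α ≤ (g ζ).1 → resT κ x α = cut κ (g ζ) α := by
    intro α ζ hαζ
    apply PreFun.ext'
    · exact (min_eq_left hαζ).symm
    · intro β h1 h2
      exact hgagree (hub β).choose ζ β (hub β).choose_spec
        (lt_of_lt_of_le h1 hαζ)
  refine ⟨x, ?_, ?_⟩
  · show resT κ x t.1 = t
    rcases K_nonempty hreg with ⟨ζ₀⟩
    rw [hres t.1 ζ₀ (le_of_lt (spec ζ₀).2.1), (spec ζ₀).2.2.1]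
  · intro α
    obtain ⟨ζ, hζ⟩ := hub α
    show resT κ x α ∈ T
    rw [hres α ζ (le_of_lt hζ)]
    exact hsub _ (spec ζ).1 α hζ

/-! ### The retraction -/

variable (κ) in
def leastBad (hne : Nonempty (K κ)) (T : Set (PreFun κ)) (x : K κ → K κ) : K κ :=
  if h : ∃ α, resT κ x α ∉ T then
    wellFounded_lt.min {α | resT κ x α ∉ T} h
  else Classical.choice hne

theorem leastBad_eq (hne : Nonempty (K κ)) {T : Set (PreFun κ)} {x : K κ → K κ} {δ : K κ}
    (h1 : resT κ x δ ∉ T) (h2 : ∀ γ, γ < δ → resT κ x γ ∈ T) :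
    leastBad κ hne T x = δ := by
  have hex : ∃ α, resT κ x α ∉ T := ⟨δ, h1⟩
  rw [leastBad, dif_pos hex]
  have hmem := wellFounded_lt.min_mem {α | resT κ x α ∉ T} hex
  rcases lt_trichotomy (wellFounded_lt.min {α | resT κ x α ∉ T} hex) δ with h | h | h
  · exact absurd (h2 _ h) hmem
  · exact h
  · exact absurd h (wellFounded_lt.not_lt_min _ h1)

theorem leastBad_spec (hne : Nonempty (K κ)) {T : Set (PreFun κ)} {x : K κ → K κ}
    (hx : x ∉ branches κ T) :
    resT κ x (leastBad κ hne T x) ∉ T ∧ ∀ γ, γ < leastBad κ hne T x → resT κ x γ ∈ T := by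
  have hex : ∃ α, resT κ x α ∉ T := by
    by_contra hc
    push_neg at hc
    exact hx (fun α => hc α)
  constructor
  · rw [leastBad, dif_pos hex]
    exact wellFounded_lt.min_mem {α | resT κ x α ∉ T} hex
  · intro γ hγ
    rw [leastBad, dif_pos hex] at hγ
    by_contra hc
    exact wellFounded_lt.not_lt_min {α | resT κ x α ∉ T} hc hγ

variable (κ) in
def predOf (δ : K κ) : K κ :=
  if h : ∃ β, β < δ ∧ ∀ γ, β < γ → δ ≤ γ then h.choose else δ

theorem predOf_spec {δ : K κ} (h : ∃ β, β < δ ∧ ∀ γ, β < γ → δ ≤ γ) :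
    predOf κ δ < δ ∧ ∀ γ, predOf κ δ < γ → δ ≤ γ := by
  rw [predOf, dif_pos h]
  exact h.choose_spec

/-- If `x` is not a branch of the (nonempty, `<κ`-closed) subtree `T`, then the least `δ`
with `x↾δ ∉ T` has an immediate predecessor. -/
theorem exists_pred (hreg : κ.IsRegular) {T : Set (PreFun κ)} (hTne : T.Nonempty)
    (hsub : IsSubtree κ T) (hclosed : IsLtClosed κ T) {x : K κ → K κ}
    (hx : x ∉ branches κ T) :
    ∃ β, β < leastBad κ (K_nonempty hreg) T x ∧
      ∀ γ, β < γ → leastBad κ (K_nonempty hreg) T x ≤ γ := by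
  set δ := leastBad κ (K_nonempty hreg) T x with hδ
  obtain ⟨hδ1, hδ2⟩ := leastBad_spec (K_nonempty hreg) hx
  by_contra hno
  push_neg at hno
  by_cases hbot : ∃ β : K κ, β < δ
  · apply hδ1
    refine hclosed δ (fun ξ => resT κ x ξ.1) (fun ξ ζ h => ?_) (fun ξ => hδ2 ξ.1 ξ.2)
      (resT κ x δ) ?_ (fun ξ => ?_)
    · have h' : (ξ : K κ) < (ζ : K κ) := Subtype.coe_lt_coe.mpr h
      refine ⟨h', ?_⟩
      show cut κ (resT κ x ζ.1) ξ.1 = resT κ x ξ.1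
      rw [cut_resT', min_eq_left (le_of_lt h')]
    · constructor
      · rintro _ ⟨ξ, rfl⟩
        exact le_of_lt ξ.2
      · intro c hc
        by_contra hcδ
        push_neg at hcδ
        obtain ⟨γ, hγ1, hγ2⟩ := hno c hcδ
        exact absurd (hc ⟨⟨γ, hγ2⟩, rfl⟩) (not_le.mpr hγ1)
    · show cut κ (resT κ x δ) ξ.1 = resT κ x ξ.1
      rw [cut_resT', min_eq_left (le_of_lt ξ.2)]
  · apply hδ1
    obtain ⟨s, hs⟩ := hTne
    have hδle : ∀ c : K κ, δ ≤ c := fun c => not_lt.mp (fun hc => hbot ⟨c, hc⟩)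
    rcases eq_or_lt_of_le (hδle s.1) with heq | hlt
    · have hss : s = resT κ x δ := by
        apply PreFun.ext'
        · exact heq.symm
        · intro β hβ hβ'
          exact absurd hβ' (fun hc => hbot ⟨β, hc⟩)
      rw [← hss]; exact hs
    · have hmem := hsub s hs δ hlt
      have h2 : cut κ s δ = resT κ x δ := by
        apply PreFun.ext'
        · rw [cut_fst]; exact min_eq_left (le_of_lt hlt)
        · intro β hβ hβ'
          exact absurd hβ' (fun hc => hbot ⟨β, hc⟩)
      rw [← h2]; exact hmem

theorem isOpen_of_nbhd {S : Set (K κ → K κ)}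
    (h : ∀ x ∈ S, ∃ s : PreFun κ, x ∈ Nbhd κ s ∧ Nbhd κ s ⊆ S) :
    @IsOpen _ (baire κ) S := by
  show TopologicalSpace.GenerateOpen {U | ∃ s : PreFun κ, U = Nbhd κ s} S
  have heq : S = ⋃₀ {U | (∃ s : PreFun κ, U = Nbhd κ s) ∧ U ⊆ S} := by
    apply Set.Subset.antisymm
    · intro x hx
      obtain ⟨s, hx1, hx2⟩ := h x hx
      exact ⟨Nbhd κ s, ⟨⟨s, rfl⟩, hx2⟩, hx1⟩
    · rintro x ⟨U, ⟨_, hUS⟩, hxU⟩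
      exact hUS hxU
  rw [heq]
  exact TopologicalSpace.GenerateOpen.sUnion _
    (fun U hU => TopologicalSpace.GenerateOpen.basic U hU.1)

theorem mem_nbhd_resT {x y : K κ → K κ} {δ : K κ} :
    y ∈ Nbhd κ (resT κ x δ) ↔ resT κ y δ = resT κ x δ := Iff.rfl

end GBaire

namespace GBaire

universe u

attribute [local instance] Classical.propDecidable

variable {κ : Cardinal.{u}}

variable (κ) in
def branchSel (hreg : κ.IsRegular) (T : Set (PreFun κ)) (hsub : IsSubtree κ T)
    (hclosed : IsLtClosed κ T) (hpr : IsPruned κ T) (s : PreFun κ) : K κ → K κ :=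
  if h : s ∈ T then (exists_branch hreg hsub hclosed hpr h).choose else fun β => β

theorem branchSel_spec (hreg : κ.IsRegular) (T : Set (PreFun κ)) (hsub : IsSubtree κ T)
    (hclosed : IsLtClosed κ T) (hpr : IsPruned κ T) {s : PreFun κ} (hs : s ∈ T) :
    branchSel κ hreg T hsub hclosed hpr s ∈ Nbhd κ s ∧
      branchSel κ hreg T hsub hclosed hpr s ∈ branches κ T := by
  rw [branchSel, dif_pos hs]
  exact (exists_branch hreg hsub hclosed hpr hs).choose_spec

variable (κ) in
def retr (hreg : κ.IsRegular) (T : Set (PreFun κ)) (hsub : IsSubtree κ T)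
    (hclosed : IsLtClosed κ T) (hpr : IsPruned κ T) (x : K κ → K κ) : K κ → K κ :=
  @ite _ (x ∈ branches κ T) (Classical.propDecidable _) x
    (branchSel κ hreg T hsub hclosed hpr
      (resT κ x (predOf κ (leastBad κ (K_nonempty hreg) T x))))

theorem retr_pos (hreg : κ.IsRegular) (T : Set (PreFun κ)) (hsub : IsSubtree κ T)
    (hclosed : IsLtClosed κ T) (hpr : IsPruned κ T) {x : K κ → K κ}
    (hx : x ∈ branches κ T) : retr κ hreg T hsub hclosed hpr x = x := by
  rw [retr, if_pos hx]

theorem retr_neg (hreg : κ.IsRegular) (T : Set (PreFun κ)) (hsub : IsSubtree κ T)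
    (hclosed : IsLtClosed κ T) (hpr : IsPruned κ T) {x : K κ → K κ}
    (hx : x ∉ branches κ T) : retr κ hreg T hsub hclosed hpr x
      = branchSel κ hreg T hsub hclosed hpr
          (resT κ x (predOf κ (leastBad κ (K_nonempty hreg) T x))) := by
  rw [retr, if_neg hx]

end GBaire

namespace GBaire

/-- If `κ` is an infinite regular cardinal and `T` is a non-empty
`<κ`-closed pruned subtree of `^{<κ}κ`, then `N_t ∩ [T] ≠ ∅` for every `t ∈ T` and the
closed set `[T]` is a retract of `^κκ`. -/
theorem retract_of_ltClosed_pruned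
    (κ : Cardinal.{u}) (hreg : κ.IsRegular)
    (T : Set (PreFun κ)) (hne : T.Nonempty) (hsub : IsSubtree κ T)
    (hclosed : IsLtClosed κ T) (hpruned : IsPruned κ T) :
    (∀ t ∈ T, (Nbhd κ t ∩ branches κ T).Nonempty) ∧ IsRetract κ (branches κ T) := by
  constructor
  · intro t ht
    obtain ⟨x, h1, h2⟩ := exists_branch hreg hsub hclosed hpruned ht
    exact ⟨x, h1, h2⟩
  set r : (K κ → K κ) → (K κ → K κ) := retr κ hreg T hsub hclosed hpruned with hrdef
  -- facts about non-branches
  have hinfo : ∀ x, x ∉ branches κ T →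
      predOf κ (leastBad κ (K_nonempty hreg) T x) < leastBad κ (K_nonempty hreg) T x ∧
      (∀ γ, predOf κ (leastBad κ (K_nonempty hreg) T x) < γ → leastBad κ (K_nonempty hreg) T x ≤ γ) ∧
      resT κ x (predOf κ (leastBad κ (K_nonempty hreg) T x)) ∈ T := by
    intro x hx
    have hp := predOf_spec (exists_pred hreg hne hsub hclosed hx)
    exact ⟨hp.1, hp.2, (leastBad_spec (K_nonempty hreg) hx).2 _ hp.1⟩
  have hrange : ∀ x, r x ∈ branches κ T := by
    intro x
    by_cases hx : x ∈ branches κ T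
    · rw [hrdef, retr_pos hreg T hsub hclosed hpruned hx]; exact hx
    · rw [hrdef, retr_neg hreg T hsub hclosed hpruned hx]
      exact (branchSel_spec hreg T hsub hclosed hpruned (hinfo x hx).2.2).2
  refine ⟨r, ?_, ?_, ?_⟩
  · -- continuity
    have hcont : @Continuous _ _ (baire κ)
        (TopologicalSpace.generateFrom {U | ∃ s : PreFun κ, U = Nbhd κ s}) r := by
      rw [continuous_generateFrom_iff]
      rintro U ⟨s, rfl⟩
      apply isOpen_of_nbhd
      intro x hx
      have hx' : resT κ (r x) s.1 = s := hx
      by_cases hxb : x ∈ branches κ T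
      · -- `x` is a branch
        obtain ⟨γ, hγ⟩ := exists_gt' hreg s.1
        refine ⟨resT κ x γ, rfl, ?_⟩
        intro y hy
        have hyx : resT κ y γ = resT κ x γ := hy
        have hyT : resT κ y γ ∈ T := by rw [hyx]; exact hxb γ
        have hxs : resT κ x s.1 = s := by
          rw [hrdef, retr_pos hreg T hsub hclosed hpruned hxb] at hx'
          exact hx'
        have hys : resT κ y s.1 = s := by
          rw [resT_agree hyx (le_of_lt hγ)]; exact hxs
        show resT κ (r y) s.1 = s
        by_cases hyb : y ∈ branches κ T
        · rw [hrdef, retr_pos hreg T hsub hclosed hpruned hyb]; exact hys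
        · obtain ⟨hp1, hp2, hp3⟩ := hinfo y hyb
          have hδγ : γ < leastBad κ (K_nonempty hreg) T y := by
            by_contra hc
            push_neg at hc
            apply (leastBad_spec (K_nonempty hreg) hyb).1
            rcases eq_or_lt_of_le hc with heq | hlt
            · rw [heq]; exact hyT
            · have he : resT κ y (leastBad κ (K_nonempty hreg) T y) = cut κ (resT κ y γ)
                  (leastBad κ (K_nonempty hreg) T y) := by
                rw [cut_resT', min_eq_left (le_of_lt hlt)]
              rw [he]
              exact hsub _ hyT _ hlt
          have hγβ : γ ≤ predOf κ (leastBad κ (K_nonempty hreg) T y) := by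
            by_contra hc
            push_neg at hc
            exact absurd (hp2 γ hc) (not_le.mpr hδγ)
          have h5 : resT κ (r y) (predOf κ (leastBad κ (K_nonempty hreg) T y))
              = resT κ y (predOf κ (leastBad κ (K_nonempty hreg) T y)) := by
            rw [hrdef, retr_neg hreg T hsub hclosed hpruned hyb]
            exact (branchSel_spec hreg T hsub hclosed hpruned hp3).1
          rw [resT_agree h5 (le_trans (le_of_lt hγ) hγβ)]
          exact hys
      · -- `x` is not a branch
        refine ⟨resT κ x (leastBad κ (K_nonempty hreg) T x), rfl, ?_⟩
        intro y hy
        have hyx : resT κ y (leastBad κ (K_nonempty hreg) T x) = resT κ x (leastBad κ (K_nonempty hreg) T x) := hy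
        have hynb : y ∉ branches κ T := by
          intro hyb
          exact (leastBad_spec (K_nonempty hreg) hxb).1 (hyx ▸ hyb (leastBad κ (K_nonempty hreg) T x))
        have hlb : leastBad κ (K_nonempty hreg) T y = leastBad κ (K_nonempty hreg) T x := by
          apply leastBad_eq (K_nonempty hreg)
          · rw [hyx]; exact (leastBad_spec (K_nonempty hreg) hxb).1
          · intro γ hγ
            rw [resT_agree hyx (le_of_lt hγ)]
            exact (leastBad_spec (K_nonempty hreg) hxb).2 γ hγ
        obtain ⟨hp1, hp2, hp3⟩ := hinfo x hxb
        have hry : r y = r x := by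
          rw [hrdef, retr_neg hreg T hsub hclosed hpruned hynb,
            retr_neg hreg T hsub hclosed hpruned hxb, hlb]
          rw [resT_agree hyx (le_of_lt hp1)]
        show resT κ (r y) s.1 = s
        rw [hry]
        exact hx'
    exact hcont
  · rintro y ⟨x, rfl⟩
    exact hrange x
  · intro x hx
    rw [hrdef, retr_pos hreg T hsub hclosed hpruned hx]

end GBaire
end
end

section
/- Let κ be an uncountable regular cardinal, let X be a subset of ^κκ, and let r : ^κκ → ^κκ be a continuous function whose range is contained in X with r(x) = x for every x ∈ X. Then for every α < κ and every subset A of X of cardinality less than κ, there exists β with α < β < κ such that: (1) x↾β ≠ y↾β for all distinct x, y ∈ A; and (2) r maps N_{x↾β} into N_{x↾β} for every x ∈ A. -/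
open Cardinal Set

noncomputable section

namespace GBaire

universe u

variable {κ : Cardinal.{u}}

lemma mem_Nbhd_resT {z x : K κ → K κ} {δ : K κ} :
    z ∈ Nbhd κ (resT κ x δ) ↔ ∀ γ : K κ, γ < δ → z γ = x γ := by
  constructor
  · intro h γ hγ
    have h2 := Sigma.ext_iff.mp h
    exact congrFun (eq_of_heq h2.2) ⟨γ, hγ⟩
  · intro h
    exact Sigma.ext_iff.mpr ⟨rfl, heq_of_eq (funext fun β => h β.1 β.2)⟩

lemma exists_strict_ub (hreg : κ.IsRegular) {ι : Type u} (f : ι → K κ)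
    (hι : #ι < κ) : ∃ b : K κ, ∀ i, f i < b := by
  have hlim : Order.IsSuccLimit κ.ord := Cardinal.isSuccLimit_ord hreg.1
  let e := Ordinal.ToType.mk (o := κ.ord)
  have hobd : (⨆ i, Order.succ ((e.symm (f i)).1)) < κ.ord := by
    apply Ordinal.iSup_lt_ord
    · rwa [hreg.cof_eq]
    · intro i; exact hlim.succ_lt (e.symm (f i)).2
  refine ⟨e ⟨_, hobd⟩, fun i => ?_⟩
  have h1 : ((e.symm (f i)).1 : Ordinal.{u}) < ⨆ i, Order.succ ((e.symm (f i)).1 : Ordinal.{u}) :=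
    lt_of_lt_of_le (Order.lt_succ _) (Ordinal.le_iSup _ i)
  have h2 : e.symm (f i) < (⟨_, hobd⟩ : Set.Iio κ.ord) := Subtype.coe_lt_coe.mp h1
  simpa using e.lt_iff_lt.mpr h2

lemma exists_lub_nat (hκ : ℵ₀ < κ) (hreg : κ.IsRegular) (g : ℕ → K κ) :
    ∃ b : K κ, (∀ n, g n ≤ b) ∧ ∀ δ : K κ, δ < b → ∃ n, δ < g n := by
  let e := Ordinal.ToType.mk (o := κ.ord)
  have hobd : (⨆ n, ((e.symm (g n)).1 : Ordinal.{u})) < κ.ord := by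
    apply Ordinal.iSup_lt_ord_lift
    · rw [hreg.cof_eq]; simpa using hκ
    · intro n; exact (e.symm (g n)).2
  refine ⟨e ⟨_, hobd⟩, fun n => ?_, fun δ hδ => ?_⟩
  · have h1 : ((e.symm (g n)).1 : Ordinal.{u}) ≤ ⨆ n, ((e.symm (g n)).1 : Ordinal.{u}) :=
      Ordinal.le_iSup (fun n => ((e.symm (g n)).1 : Ordinal.{u})) n
    have h2 : e.symm (g n) ≤ (⟨_, hobd⟩ : Set.Iio κ.ord) := Subtype.coe_le_coe.mp h1
    simpa using e.le_iff_le.mpr h2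
  · have h1 : e.symm δ < (⟨_, hobd⟩ : Set.Iio κ.ord) := by
      simpa using e.symm.lt_iff_lt.mpr hδ
    obtain ⟨n, hn⟩ := Ordinal.lt_iSup_iff.mp (Subtype.coe_lt_coe.mpr h1)
    refine ⟨n, ?_⟩
    have := e.lt_iff_lt.mpr (show e.symm δ < e.symm (g n) from Subtype.coe_lt_coe.mp hn)
    simpa using this

lemma exists_basic_subset [Nonempty (K κ)] {U : Set (K κ → K κ)}
    (hU : TopologicalSpace.GenerateOpen {V | ∃ s : PreFun κ, V = Nbhd κ s} U) :
    ∀ x ∈ U, ∃ β : K κ, Nbhd κ (resT κ x β) ⊆ U := by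
  induction hU with
  | basic V hV =>
      obtain ⟨s, rfl⟩ := hV
      intro x hx
      exact ⟨s.1, by rw [show resT κ x s.1 = s from hx]⟩
  | univ => exact fun x _ => ⟨Classical.arbitrary _, fun _ _ => trivial⟩
  | inter U V hU hV ihU ihV =>
      intro x hx
      obtain ⟨β₁, h₁⟩ := ihU x hx.1
      obtain ⟨β₂, h₂⟩ := ihV x hx.2
      refine ⟨max β₁ β₂, fun z hz => ⟨h₁ ?_, h₂ ?_⟩⟩
      · exact mem_Nbhd_resT.mpr fun γ hγ =>
          mem_Nbhd_resT.mp hz γ (lt_of_lt_of_le hγ (le_max_left _ _))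
      · exact mem_Nbhd_resT.mpr fun γ hγ =>
          mem_Nbhd_resT.mp hz γ (lt_of_lt_of_le hγ (le_max_right _ _))
  | sUnion S hS ih =>
      intro x hx
      obtain ⟨V, hVS, hxV⟩ := hx
      obtain ⟨β, hβ⟩ := ih V hVS x hxV
      exact ⟨β, fun z hz => ⟨V, hVS, hβ hz⟩⟩


/-- Let `κ` be an uncountable regular cardinal and let
`r : ^κκ → ^κκ` be a continuous function with range contained in `X ⊆ ^κκ` which is the
identity on `X`.  Then for every `α < κ` and every `A ⊆ X` of cardinality `< κ` there is
`β` with `α < β < κ` such that (1) distinct elements of `A` have distinct restrictions to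
`β` and (2) `r` maps `N_{x↾β}` into `N_{x↾β}` for every `x ∈ A`. -/
theorem exists_split_and_mapsTo
    (κ : Cardinal.{u}) (hκ : ℵ₀ < κ) (hreg : κ.IsRegular)
    (X : Set (K κ → K κ)) (r : (K κ → K κ) → (K κ → K κ))
    (hr : @Continuous _ _ (baire κ) (baire κ) r)
    (hrange : Set.range r ⊆ X) (hid : ∀ x ∈ X, r x = x)
    (α : K κ) (A : Set (K κ → K κ)) (hAX : A ⊆ X) (hA : #A < κ) :
    ∃ β : K κ, α < β ∧
      (∀ x ∈ A, ∀ y ∈ A, x ≠ y → resT κ x β ≠ resT κ y β) ∧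
      ∀ x ∈ A, Set.MapsTo r (Nbhd κ (resT κ x β)) (Nbhd κ (resT κ x β)) := by
  classical
  haveI : Nonempty (K κ) :=
    Ordinal.toType_nonempty_iff_ne_zero.mpr (Cardinal.isSuccLimit_ord hreg.1).pos.ne'
  -- Step A: continuity gives, for each x ∈ A and δ, a β with r(N_{x↾β}) ⊆ N_{x↾δ}
  have key : ∀ x, x ∈ A → ∀ δ : K κ, ∃ β : K κ,
      ∀ z ∈ Nbhd κ (resT κ x β), r z ∈ Nbhd κ (resT κ x δ) := by
    intro x hx δ
    have hopen : TopologicalSpace.GenerateOpen {V | ∃ s : PreFun κ, V = Nbhd κ s}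
        (r ⁻¹' Nbhd κ (resT κ x δ)) := by
      have h1 : @IsOpen _ (baire κ) (Nbhd κ (resT κ x δ)) :=
        TopologicalSpace.GenerateOpen.basic _ ⟨_, rfl⟩
      exact @IsOpen.preimage _ _ (baire κ) (baire κ) r hr _ h1
    have hxmem : x ∈ r ⁻¹' Nbhd κ (resT κ x δ) := by
      have : r x = x := hid x (hAX hx)
      simp only [Set.mem_preimage, this]
      exact rfl
    obtain ⟨β, hβ⟩ := exists_basic_subset hopen x hxmem
    exact ⟨β, fun z hz => hβ hz⟩
  choose! B hB using key
  -- difference points for distinct pairs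
  have diff : ∀ p : ↥A × ↥A, ∃ δ : K κ, p.1.1 ≠ p.2.1 → p.1.1 δ ≠ p.2.1 δ := by
    intro p
    by_cases h : p.1.1 = p.2.1
    · exact ⟨Classical.arbitrary _, fun hne => absurd h hne⟩
    · obtain ⟨δ, hδ⟩ := Function.ne_iff.mp h
      exact ⟨δ, fun _ => hδ⟩
  choose d hd using diff
  -- a strict upper bound β₀ for α and all difference points
  have hcard0 : #((↥A × ↥A) ⊕ PUnit.{u+1}) < κ := by
    simp only [Cardinal.mk_sum, Cardinal.mk_prod, Cardinal.mk_punit, Cardinal.lift_id]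
    exact Cardinal.add_lt_of_lt hreg.1
      (Cardinal.mul_lt_of_lt hreg.1 hA hA) (Cardinal.one_lt_aleph0.trans_le hreg.1)
  obtain ⟨β₀, hβ₀⟩ := exists_strict_ub hreg
    (Sum.elim (fun p : ↥A × ↥A => d p) (fun _ : PUnit => α)) hcard0
  -- the step function
  have hcard1 : #(↥A ⊕ PUnit.{u+1}) < κ := by
    simp only [Cardinal.mk_sum, Cardinal.mk_punit, Cardinal.lift_id]
    exact Cardinal.add_lt_of_lt hreg.1 hA (Cardinal.one_lt_aleph0.trans_le hreg.1)
  have step : ∀ δ : K κ, ∃ b : K κ, δ < b ∧ ∀ x : ↥A, B x.1 δ < b := by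
    intro δ
    obtain ⟨b, hb⟩ := exists_strict_ub hreg
      (Sum.elim (fun x : ↥A => B x.1 δ) (fun _ : PUnit => δ)) hcard1
    exact ⟨b, hb (Sum.inr PUnit.unit), fun x => hb (Sum.inl x)⟩
  choose F hF1 hF2 using step
  set g : ℕ → K κ := fun n => F^[n] β₀ with hg
  have hg0 : g 0 = β₀ := rfl
  have hgs : ∀ n, g (n + 1) = F (g n) := fun n => Function.iterate_succ_apply' F n β₀
  obtain ⟨b, hub, hlub⟩ := exists_lub_nat hκ hreg g
  have hβ₀b : β₀ ≤ b := hub 0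
  refine ⟨b, ?_, ?_, ?_⟩
  · exact lt_of_lt_of_le (hβ₀ (Sum.inr PUnit.unit)) hβ₀b
  · intro x hx y hy hxy hres
    have hδ : x (d (⟨x, hx⟩, ⟨y, hy⟩)) ≠ y (d (⟨x, hx⟩, ⟨y, hy⟩)) :=
      hd (⟨x, hx⟩, ⟨y, hy⟩) hxy
    have hlt : d (⟨x, hx⟩, ⟨y, hy⟩) < b :=
      lt_of_lt_of_le (hβ₀ (Sum.inl (⟨x, hx⟩, ⟨y, hy⟩))) hβ₀b
    exact hδ ((mem_Nbhd_resT.mp (show y ∈ Nbhd κ (resT κ x b) from hres.symm)) _ hlt).symm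
  · intro x hx z hz
    refine mem_Nbhd_resT.mpr fun γ hγ => ?_
    obtain ⟨n, hn⟩ := hlub γ hγ
    have hz' : z ∈ Nbhd κ (resT κ x (B x (g n))) := by
      refine mem_Nbhd_resT.mpr fun γ' hγ' => mem_Nbhd_resT.mp hz γ' ?_
      calc γ' < B x (g n) := hγ'
        _ < F (g n) := hF2 (g n) ⟨x, hx⟩
        _ = g (n + 1) := (hgs n).symm
        _ ≤ b := hub (n + 1)
    exact mem_Nbhd_resT.mp (hB x hx (g n) z hz') γ hn

end GBaire
end
end

section
/- Let κ be an uncountable regular cardinal. If there exists a cardinal μ < κ with 2^μ = 2^κ, then every non-empty subset of ^κκ is a continuous image of ^κκ. -/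
open Cardinal Set

noncomputable section

namespace GBaire

/-- Let `κ` be an uncountable regular cardinal.  If there is a
cardinal `μ < κ` with `2^μ = 2^κ`, then every non-empty subset of `^κκ` is a continuous
image of `^κκ`. -/
theorem continuous_image_of_two_power_eq
    (κ : Cardinal.{u}) (hκ : ℵ₀ < κ) (hreg : κ.IsRegular)
    (μ : Cardinal.{u}) (hμκ : μ < κ) (h2 : (2 : Cardinal.{u}) ^ μ = 2 ^ κ)
    (X : Set (K κ → K κ)) (hX : X.Nonempty) :
    IsContImage κ X := by
  haveI : IsWellOrder (K κ) (· < ·) := isWellOrder_lt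
  haveI : Nonempty X := hX.to_subtype
  have hord : μ.ord < κ.ord := Cardinal.ord_lt_ord.2 hμκ
  set α : K κ := Ordinal.ToType.mk ⟨μ.ord, hord⟩ with hα
  have h1 : Ordinal.typein ((· < ·) : K κ → K κ → Prop) α = μ.ord := by
    exact Ordinal.typein_enum (α := K κ) (· < ·) (o := μ.ord) (by rw [Ordinal.type_toType]; exact hord)
  have hcard : #{β : K κ // β < α} = μ := by
    have h2' := Ordinal.card_typein (r := ((· < ·) : K κ → K κ → Prop)) α
    rw [h1, Cardinal.card_ord] at h2'
    exact h2'.symm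
  have hK : #(K κ) = κ := by rw [Cardinal.mk_toType, Cardinal.card_ord]
  have h2κ : (2 : Cardinal.{u}) ≤ κ := by
    refine le_trans ?_ hκ.le
    exact_mod_cast (Cardinal.nat_lt_aleph0 2).le
  have hchain : #X ≤ #({β : K κ // β < α} → K κ) := by
    calc #X ≤ #(K κ → K κ) := Cardinal.mk_set_le X
    _ = κ ^ κ := by rw [← Cardinal.power_def, hK]
    _ = 2 ^ κ := Cardinal.power_self_eq hκ.le
    _ = 2 ^ μ := h2.symm
    _ ≤ κ ^ μ := Cardinal.power_le_power_right h2κ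
    _ = #({β : K κ // β < α} → K κ) := by rw [← Cardinal.power_def, hK, hcard]
  obtain ⟨f⟩ := Cardinal.le_def _ _ |>.1 hchain
  set g : ({β : K κ // β < α} → K κ) → X := Function.invFun f with hg
  have hgsurj : Function.Surjective g := Function.invFun_surjective f.injective
  refine ⟨fun x => g (fun β => x β.1), ?_, ?_⟩
  · -- continuity: every preimage is open
    letI := baire κ
    refine continuous_def.2 fun U _ => ?_
    have key : (fun x : K κ → K κ => g (fun β => x β.1)) ⁻¹' U =
        ⋃ x ∈ (fun x : K κ → K κ => g (fun β => x β.1)) ⁻¹' U, Nbhd κ (resT κ x α) := by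
      ext y
      simp only [mem_iUnion, mem_preimage]
      constructor
      · intro hy
        exact ⟨y, hy, rfl⟩
      · rintro ⟨x, hx, hyx⟩
        have hres : resT κ y α = resT κ x α := hyx
        have h2nd : (fun β : {β : K κ // β < α} => y β.1) = fun β => x β.1 :=
          eq_of_heq (Sigma.mk.inj_iff.1 hres).2
        rw [show (fun β : {β : K κ // β < α} => y β.1) = fun β => x β.1 from h2nd]
        exact hx
    rw [key]
    refine isOpen_biUnion fun x _ => ?_
    exact TopologicalSpace.GenerateOpen.basic _ ⟨resT κ x α, rfl⟩
  · -- surjectivity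
    intro y
    obtain ⟨p, hp⟩ := hgsurj y
    classical
    refine ⟨fun β => if h : β < α then p ⟨β, h⟩ else β, ?_⟩
    have hfix : (fun β : {β : K κ // β < α} =>
        (fun γ : K κ => if h : γ < α then p ⟨γ, h⟩ else γ) β.1) = p := by
      funext β
      simp [β.2]
    exact (congrArg g hfix).trans hp


end GBaire
end
end
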